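/- In the group algebra R = F₂[D], define α₀ = β₀ = 1 and recursively α_{j+1} = β_j·(g₁ − 1) and β_{j+1} = α_j·(g₂ − 1), so that α_j and β_j are the alternating length-j products ⋯(g₁−1)(g₂−1)(g₁−1) and ⋯(g₂−1)(g₁−1)(g₂−1) respectively. Then the set {α_j : j ≥ 0} ∪ {β_j : j ≥ 0} spans R as an F₂-vector space. -/

import Mathlib

/-- In the group algebra `R = F₂[D]` of the dihedral group `D` of order
`2^(e+2)` (with `g₁ = sr 0`, `g₂ = sr 1`), define `α₀ = β₀ = 1` and recursively
`α_{j+1} = β_j (g₁ - 1)`, `β_{j+1} = α_j (g₂ - 1)`.  Then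
`{α_j : j ≥ 0} ∪ {β_j : j ≥ 0}` spans `R` as an `F₂`-vector space. -/
theorem alternating_products_span (e : ℕ) (he : 1 ≤ e)
    (α β : ℕ → MonoidAlgebra (ZMod 2) (DihedralGroup (2 ^ (e + 1))))
    (hα0 : α 0 = 1) (hβ0 : β 0 = 1)
    (hα : ∀ j, α (j + 1) =
      β j * (MonoidAlgebra.of (ZMod 2) (DihedralGroup (2 ^ (e + 1)))
        (DihedralGroup.sr 0) - 1))
    (hβ : ∀ j, β (j + 1) =
      α j * (MonoidAlgebra.of (ZMod 2) (DihedralGroup (2 ^ (e + 1)))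
        (DihedralGroup.sr 1) - 1)) :
    Submodule.span (ZMod 2) (Set.range α ∪ Set.range β) = ⊤ := by
  haveI : NeZero (2 ^ (e + 1)) := ⟨by positivity⟩
  set A := MonoidAlgebra.of (ZMod 2) (DihedralGroup (2 ^ (e + 1))) with hA
  set S := Submodule.span (ZMod 2) (Set.range α ∪ Set.range β) with hS
  have hchar : ∀ x : MonoidAlgebra (ZMod 2) (DihedralGroup (2 ^ (e + 1))),
      x + x = 0 := by
    intro x
    have h2 : (2 : ZMod 2) = 0 := rfl
    calc x + x = (2 : ZMod 2) • x := (two_smul _ x).symm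
      _ = 0 := by rw [h2, zero_smul]
  have hsq : ∀ g : DihedralGroup (2 ^ (e + 1)), g * g = 1 →
      (A g - 1) * (A g - 1) = 0 := by
    intro g hg
    have h1 : A g * A g = 1 := by rw [← map_mul, hg, map_one]
    have hexp : (A g - 1) * (A g - 1) = A g * A g + 1 - (A g + A g) := by
      noncomm_ring
    rw [hexp, h1, hchar (A g), sub_zero]
    exact hchar 1
  have hmemα : ∀ j, α j ∈ S := fun j => Submodule.subset_span (Or.inl ⟨j, rfl⟩)
  have hmemβ : ∀ j, β j ∈ S := fun j => Submodule.subset_span (Or.inr ⟨j, rfl⟩)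
  have hg1sq : (DihedralGroup.sr 0 : DihedralGroup (2 ^ (e + 1))) *
      DihedralGroup.sr 0 = 1 := DihedralGroup.sr_mul_self 0
  have hg2sq : (DihedralGroup.sr 1 : DihedralGroup (2 ^ (e + 1))) *
      DihedralGroup.sr 1 = 1 := DihedralGroup.sr_mul_self 1
  -- right multiplication of generators by (g₁ - 1) stays in S
  have hα1 : ∀ j, α j * (A (DihedralGroup.sr 0) - 1) ∈ S := by
    intro j
    cases j with
    | zero =>
      have h : α 0 * (A (DihedralGroup.sr 0) - 1) = α 1 := by
        rw [hα 0, hα0, hβ0]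
      rw [h]; exact hmemα 1
    | succ j =>
      rw [hα j, mul_assoc, hsq _ hg1sq, mul_zero]
      exact S.zero_mem
  have hα2 : ∀ j, α j * (A (DihedralGroup.sr 1) - 1) ∈ S := by
    intro j
    rw [← hβ j]; exact hmemβ (j + 1)
  have hβ2 : ∀ j, β j * (A (DihedralGroup.sr 1) - 1) ∈ S := by
    intro j
    cases j with
    | zero =>
      have h : β 0 * (A (DihedralGroup.sr 1) - 1) = β 1 := by
        rw [hβ 0, hβ0, hα0]
      rw [h]; exact hmemβ 1
    | succ j =>
      rw [hβ j, mul_assoc, hsq _ hg2sq, mul_zero]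
      exact S.zero_mem
  have hβ1 : ∀ j, β j * (A (DihedralGroup.sr 0) - 1) ∈ S := by
    intro j
    rw [← hα j]; exact hmemα (j + 1)
  -- S is closed under right multiplication by (A g - 1), g ∈ {g₁, g₂}
  have hclosed : ∀ g : DihedralGroup (2 ^ (e + 1)),
      (∀ j, α j * (A g - 1) ∈ S) → (∀ j, β j * (A g - 1) ∈ S) →
      ∀ x ∈ S, x * (A g - 1) ∈ S := by
    intro g hag hbg x hx
    induction hx using Submodule.span_induction with
    | mem y hy =>
      rcases hy with ⟨j, rfl⟩ | ⟨j, rfl⟩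
      · exact hag j
      · exact hbg j
    | zero => rw [zero_mul]; exact S.zero_mem
    | add y z hy hz ihy ihz => rw [add_mul]; exact S.add_mem ihy ihz
    | smul a y hy ihy => rw [smul_mul_assoc]; exact S.smul_mem a ihy
  have hmul : ∀ g : DihedralGroup (2 ^ (e + 1)),
      (∀ x ∈ S, x * (A g - 1) ∈ S) → ∀ x ∈ S, x * A g ∈ S := by
    intro g hg x hx
    have h : x * A g = x * (A g - 1) + x := by
      rw [mul_sub, mul_one, sub_add_cancel]
    rw [h]; exact S.add_mem (hg x hx) hx
  have hmul1 : ∀ x ∈ S, x * A (DihedralGroup.sr 0) ∈ S :=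
    hmul _ (hclosed _ hα1 hβ1)
  have hmul2 : ∀ x ∈ S, x * A (DihedralGroup.sr 1) ∈ S :=
    hmul _ (hclosed _ hα2 hβ2)
  have hone : (1 : MonoidAlgebra (ZMod 2) (DihedralGroup (2 ^ (e + 1)))) ∈ S := by
    rw [← hα0]; exact hmemα 0
  -- every group element's image lies in S
  have hP : ∀ k : ℕ,
      A (DihedralGroup.r (k : ZMod (2 ^ (e + 1)))) ∈ S ∧
      A (DihedralGroup.r (-(k : ZMod (2 ^ (e + 1))))) ∈ S ∧
      A (DihedralGroup.sr (k : ZMod (2 ^ (e + 1)))) ∈ S ∧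
      A (DihedralGroup.sr (-(k : ZMod (2 ^ (e + 1))))) ∈ S := by
    intro k
    induction k with
    | zero =>
      have hr0 : A (DihedralGroup.r (0 : ZMod (2 ^ (e + 1)))) = 1 := by
        rw [← DihedralGroup.one_def, map_one]
      have hsr0 : A (DihedralGroup.sr (0 : ZMod (2 ^ (e + 1)))) ∈ S := by
        have := hmul1 1 hone
        rwa [one_mul] at this
      simp only [Nat.cast_zero, neg_zero]
      exact ⟨hr0 ▸ hone, hr0 ▸ hone, hsr0, hsr0⟩
    | succ k ih =>
      obtain ⟨hr, hrn, hsr, hsrn⟩ := ih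
      have h1 : A (DihedralGroup.r ((k + 1 : ℕ) : ZMod (2 ^ (e + 1)))) ∈ S := by
        have := hmul2 _ hsrn
        rw [← map_mul, DihedralGroup.sr_mul_sr] at this
        convert this using 3
        push_cast; ring
      have h2 : A (DihedralGroup.sr ((k + 1 : ℕ) : ZMod (2 ^ (e + 1)))) ∈ S := by
        have := hmul2 _ hrn
        rw [← map_mul, DihedralGroup.r_mul_sr] at this
        convert this using 3
        push_cast; ring
      have h3 : A (DihedralGroup.sr (-((k + 1 : ℕ) : ZMod (2 ^ (e + 1))))) ∈ S := by
        have := hmul1 _ h1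
        rw [← map_mul, DihedralGroup.r_mul_sr] at this
        convert this using 3
        push_cast; ring
      have h4 : A (DihedralGroup.r (-((k + 1 : ℕ) : ZMod (2 ^ (e + 1))))) ∈ S := by
        have := hmul1 _ h2
        rw [← map_mul, DihedralGroup.sr_mul_sr] at this
        convert this using 3
        push_cast; ring
      exact ⟨h1, h4, h2, h3⟩
  have hall : ∀ g : DihedralGroup (2 ^ (e + 1)), A g ∈ S := by
    intro g
    cases g with
    | r i =>
      obtain ⟨k, rfl⟩ := ZMod.natCast_zmod_surjective i
      exact (hP k).1
    | sr i =>
      obtain ⟨k, rfl⟩ := ZMod.natCast_zmod_surjective i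
      exact (hP k).2.2.1
  rw [hS, eq_top_iff]
  intro x _
  have hx : x ∈ S := by
    induction x using MonoidAlgebra.induction_linear with
    | zero => exact S.zero_mem
    | add y z hy hz => exact S.add_mem (hy trivial) (hz trivial)
    | single g r =>
      have h : MonoidAlgebra.single g r = r • A g := by
        rw [hA, MonoidAlgebra.of_apply, MonoidAlgebra.smul_single', mul_one]
      rw [h]
      exact S.smul_mem _ (hall g)
  exact hx
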